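/- arXiv:1004.1084 — 3 statements merged into one kernel-verified Lean document; each statement's English description precedes it below -/
import Mathlib

section
/- An admissible set H (i.e., ν_p(H) < p for all primes p) has 𝔖(H) > 0, and conversely if ν_p(H) = p for some prime p then 𝔖(H) = 0. -/
/-- Number of residue classes modulo `p` occupied by the finite set `H` of integers. -/
def nu (p : ℕ) (H : Finset ℤ) : ℕ := (H.image fun h : ℤ => (h : ZMod p)).card

/-- The singular series of the prime tuple conjecture. -/
noncomputable def singularSeries (H : Finset ℤ) : ℝ :=
  ∏' p : Nat.Primes, (1 - (nu p H : ℝ) / ((p : ℕ) : ℝ)) * ((1 - 1 / ((p : ℕ) : ℝ))⁻¹) ^ H.card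

lemma nu_le (p : ℕ) (H : Finset ℤ) : nu p H ≤ H.card := Finset.card_image_le

lemma nu_eq_card (H : Finset ℤ) : ∃ B : ℕ, ∀ p : ℕ, p.Prime → B < p → nu p H = H.card := by
  obtain ⟨M, hM⟩ : ∃ M : ℕ, ∀ a ∈ H, a.natAbs ≤ M :=
    ⟨H.sup Int.natAbs, fun a ha => Finset.le_sup ha⟩
  refine ⟨2 * M, fun p hp hBp => ?_⟩
  apply Finset.card_image_of_injOn
  intro a ha b hb hab
  rw [ZMod.intCast_eq_intCast_iff] at hab
  have hdvd : (p : ℤ) ∣ b - a := Int.ModEq.dvd hab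
  have habs : |b - a| < (p : ℤ) := by
    have h1 := hM a ha
    have h2 := hM b hb
    rw [Int.abs_eq_natAbs]
    omega
  have := Int.eq_zero_of_abs_lt_dvd hdvd habs
  omega

lemma abs_log_one_sub_add (x : ℝ) (h0 : 0 ≤ x) (h : x ≤ 1/2) :
    |x + Real.log (1 - x)| ≤ 2 * x ^ 2 := by
  have h1 : |x| < 1 := by rw [abs_of_nonneg h0]; linarith
  have key := Real.abs_log_sub_add_sum_range_le h1 1
  simp only [Finset.range_one, Finset.sum_singleton, pow_one] at key
  norm_num at key
  calc |x + Real.log (1 - x)| ≤ x ^ 2 / (1 - |x|) := key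
    _ ≤ 2 * x ^ 2 := by
        rw [abs_of_nonneg h0, div_le_iff₀ (by linarith)]
        nlinarith

lemma factor_pos (H : Finset ℤ) (p : Nat.Primes) (h : nu p H < p) :
    0 < (1 - (nu (p : ℕ) H : ℝ) / ((p : ℕ) : ℝ)) * ((1 - 1 / ((p : ℕ) : ℝ))⁻¹) ^ H.card := by
  have hp2 : 2 ≤ (p : ℕ) := p.2.two_le
  have hp0 : (0 : ℝ) < ((p : ℕ) : ℝ) := by exact_mod_cast p.2.pos
  apply mul_pos
  · rw [sub_pos, div_lt_one hp0]
    exact_mod_cast h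
  · apply pow_pos
    rw [inv_pos, sub_pos, div_lt_one hp0]
    exact_mod_cast hp2

lemma summable_log (H : Finset ℤ) (hadm : ∀ p : ℕ, p.Prime → nu p H < p) :
    Summable fun p : Nat.Primes =>
      Real.log ((1 - (nu (p : ℕ) H : ℝ) / ((p : ℕ) : ℝ)) *
        ((1 - 1 / ((p : ℕ) : ℝ))⁻¹) ^ H.card) := by
  set k := H.card with hk
  obtain ⟨B, hB⟩ := nu_eq_card H
  apply Summable.of_norm_bounded_eventually
    (g := fun p : Nat.Primes => (2 * (k : ℝ) ^ 2 + 2 * k) * (1 / ((p : ℕ) : ℝ) ^ 2))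
  · exact ((Real.summable_one_div_nat_pow.mpr (by norm_num)).mul_left _).subtype _
  · have hev : ∀ᶠ p : Nat.Primes in Filter.cofinite, max B (2 * k) < (p : ℕ) := by
      apply Set.Finite.subset (Set.Finite.preimage
        (Set.injOn_of_injective Subtype.val_injective) (Set.finite_Iic (max B (2 * k))))
      intro p hp
      exact Set.mem_preimage.mpr (Set.mem_Iic.mpr (not_lt.mp hp))
    filter_upwards [hev] with p hp
    have hpB : B < (p : ℕ) := lt_of_le_of_lt (le_max_left _ _) hp
    have hpk : 2 * k < (p : ℕ) := lt_of_le_of_lt (le_max_right _ _) hp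
    have hp2 : 2 ≤ (p : ℕ) := p.2.two_le
    have hP : (0 : ℝ) < ((p : ℕ) : ℝ) := by positivity
    have hnu : nu (p : ℕ) H = k := hB p p.2 hpB
    have hk2 : (k : ℝ) / ((p : ℕ) : ℝ) ≤ 1 / 2 := by
      have h2k : ((2 * k : ℕ) : ℝ) ≤ ((p : ℕ) : ℝ) := by exact_mod_cast hpk.le
      push_cast at h2k
      rw [div_le_div_iff₀ hP (by norm_num)]
      linarith
    have hp12 : 1 / ((p : ℕ) : ℝ) ≤ 1 / 2 := by
      apply one_div_le_one_div_of_le (by norm_num)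
      exact_mod_cast hp2
    have h1pos : (0 : ℝ) < 1 - 1 / ((p : ℕ) : ℝ) := by
      rw [sub_pos, div_lt_one hP]
      exact_mod_cast one_lt_two.trans_le hp2
    have hkpos : (0 : ℝ) ≤ (k : ℝ) / ((p : ℕ) : ℝ) := by positivity
    have hkp1 : (0 : ℝ) < 1 - (k : ℝ) / ((p : ℕ) : ℝ) := by linarith
    -- rewrite the log
    rw [hnu, Real.log_mul (ne_of_gt hkp1) (by positivity), Real.log_pow, Real.log_inv]
    have e1 := abs_log_one_sub_add ((k : ℝ) / ((p : ℕ) : ℝ)) hkpos hk2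
    have e2 := abs_log_one_sub_add (1 / ((p : ℕ) : ℝ)) (by positivity) hp12
    rw [Real.norm_eq_abs]
    have :
        Real.log (1 - (k : ℝ) / ((p : ℕ) : ℝ)) + (k : ℝ) * -Real.log (1 - 1 / ((p : ℕ) : ℝ)) =
          ((k : ℝ) / ((p : ℕ) : ℝ) + Real.log (1 - (k : ℝ) / ((p : ℕ) : ℝ))) -
            (k : ℝ) * (1 / ((p : ℕ) : ℝ) + Real.log (1 - 1 / ((p : ℕ) : ℝ))) := by
      field_simp
      ring
    rw [this]
    calc |_ - _| ≤ |(k : ℝ) / ((p : ℕ) : ℝ) + Real.log (1 - (k : ℝ) / ((p : ℕ) : ℝ))|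
          + |(k : ℝ)| * |1 / ((p : ℕ) : ℝ) + Real.log (1 - 1 / ((p : ℕ) : ℝ))| := by
          rw [← abs_mul]; exact abs_sub _ _
      _ ≤ 2 * ((k : ℝ) / ((p : ℕ) : ℝ)) ^ 2 + (k : ℝ) * (2 * (1 / ((p : ℕ) : ℝ)) ^ 2) := by
          rw [abs_of_nonneg (by positivity : (0:ℝ) ≤ (k:ℝ))]
          exact add_le_add e1 (mul_le_mul_of_nonneg_left e2 (by positivity))
      _ = (2 * (k : ℝ) ^ 2 + 2 * k) * (1 / ((p : ℕ) : ℝ) ^ 2) := by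
          field_simp

theorem singularSeries_pos_iff_admissible (H : Finset ℤ) :
    ((∀ p : ℕ, p.Prime → nu p H < p) → 0 < singularSeries H) ∧
    ((∃ p : ℕ, p.Prime ∧ nu p H = p) → singularSeries H = 0) := by
  constructor
  · intro hadm
    have hpos : ∀ p : Nat.Primes,
        0 < (1 - (nu (p : ℕ) H : ℝ) / ((p : ℕ) : ℝ)) * ((1 - 1 / ((p : ℕ) : ℝ))⁻¹) ^ H.card :=
      fun p => factor_pos H p (hadm p p.2)
    have hsum := summable_log H hadm
    have hprod : HasProd
        (fun p : Nat.Primes =>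
          (1 - (nu (p : ℕ) H : ℝ) / ((p : ℕ) : ℝ)) * ((1 - 1 / ((p : ℕ) : ℝ))⁻¹) ^ H.card)
        (Real.exp (∑' p : Nat.Primes,
          Real.log ((1 - (nu (p : ℕ) H : ℝ) / ((p : ℕ) : ℝ)) *
            ((1 - 1 / ((p : ℕ) : ℝ))⁻¹) ^ H.card))) := by
      exact (hsum.hasSum.rexp).congr_fun fun q => (Real.exp_log (hpos q)).symm
    rw [singularSeries, hprod.tprod_eq]
    exact Real.exp_pos _
  · rintro ⟨p, hp, hnu⟩
    have hzero :
        (1 - (nu ((⟨p, hp⟩ : Nat.Primes) : ℕ) H : ℝ) / (((⟨p, hp⟩ : Nat.Primes) : ℕ) : ℝ)) *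
          ((1 - 1 / (((⟨p, hp⟩ : Nat.Primes) : ℕ) : ℝ))⁻¹) ^ H.card *
          0 = 0 := by ring
    have hP : HasProd
        (fun q : Nat.Primes =>
          (1 - (nu (q : ℕ) H : ℝ) / ((q : ℕ) : ℝ)) * ((1 - 1 / ((q : ℕ) : ℝ))⁻¹) ^ H.card)
        0 := by
      unfold HasProd
      apply Filter.Tendsto.congr' _ tendsto_const_nhds
      filter_upwards [Filter.eventually_ge_atTop {(⟨p, hp⟩ : Nat.Primes)}] with s hs
      refine (Finset.prod_eq_zero (hs (Finset.mem_singleton_self _)) ?_).symm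
      have : (nu p H : ℝ) / (p : ℝ) = 1 := by
        rw [hnu, div_self]
        exact_mod_cast hp.pos.ne'
      simp [this]
    rw [singularSeries, hP.tprod_eq]
end

section
/- Let H be an admissible k-element set of integers, P a squarefree positive integer, and for h ∈ ℤ define Π₁(h) = ∏_{p | P} [(1 − ν_p(H∪{h})/p) / ((1 − ν_p(H)/p)(1 − 1/p))]. Then the average (1/P) ∑_{h=1}^{P} Π₁(h) equals exactly 1. -/
open Finset

/-- Sum of `g p` over all residues mod `p` (as a total function of `p`). -/
noncomputable def localSum (g : (p : ℕ) → ZMod p → ℝ) (p : ℕ) : ℝ :=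
  if h : p = 0 then 0 else
    haveI : NeZero p := ⟨h⟩
    ∑ a : ZMod p, g p a

lemma localSum_eq (g : (p : ℕ) → ZMod p → ℝ) (p : ℕ) [NeZero p] :
    localSum g p = ∑ a : ZMod p, g p a := by
  rw [localSum, dif_neg (NeZero.ne p)]

/-- The local sum at a prime `p`. -/
lemma sum_local (p : ℕ) [NeZero p] (hp : p.Prime) (H : Finset ℤ) (hlt : nu p H < p) :
    ∑ a : ZMod p,
      (1 - ((insert a (H.image fun h : ℤ => (h : ZMod p))).card : ℝ) / p) /
        ((1 - (nu p H : ℝ) / p) * (1 - 1 / (p : ℝ))) = p := by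
  set T := H.image fun h : ℤ => (h : ZMod p) with hT
  have hcardT : T.card = nu p H := rfl
  rw [← Finset.sum_add_sum_compl T]
  have h1 : ∀ a ∈ T, (1 - ((insert a T).card : ℝ) / p) /
      ((1 - (nu p H : ℝ) / p) * (1 - 1 / (p : ℝ)))
      = (1 - (nu p H : ℝ) / p) / ((1 - (nu p H : ℝ) / p) * (1 - 1 / (p : ℝ))) := by
    intro a ha
    rw [Finset.insert_eq_self.mpr ha, hcardT]
  have h2 : ∀ a ∈ Tᶜ, (1 - ((insert a T).card : ℝ) / p) /
      ((1 - (nu p H : ℝ) / p) * (1 - 1 / (p : ℝ)))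
      = (1 - ((nu p H : ℝ) + 1) / p) / ((1 - (nu p H : ℝ) / p) * (1 - 1 / (p : ℝ))) := by
    intro a ha
    rw [Finset.mem_compl] at ha
    rw [Finset.card_insert_of_notMem ha, hcardT]
    push_cast
    ring_nf
  rw [Finset.sum_congr rfl h1, Finset.sum_congr rfl h2, Finset.sum_const, Finset.sum_const,
    Finset.card_compl, hcardT, ZMod.card, nsmul_eq_mul, nsmul_eq_mul,
    Nat.cast_sub hlt.le]
  have hp0 : (p : ℝ) ≠ 0 := Nat.cast_ne_zero.mpr hp.ne_zero
  have hnu : (nu p H : ℝ) < p := by exact_mod_cast hlt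
  have hd1 : (1 : ℝ) - (nu p H : ℝ) / p ≠ 0 := by
    have : (nu p H : ℝ) / p < 1 := (div_lt_one (by positivity)).mpr hnu
    linarith
  have hd2 : (1 : ℝ) - 1 / (p : ℝ) ≠ 0 := by
    have h2p : (2 : ℝ) ≤ p := by exact_mod_cast hp.two_le
    have : (1 : ℝ) / p < 1 := by
      rw [div_lt_one (by positivity)]; linarith
    linarith
  have hD : (1 - (nu p H : ℝ) / p) * (1 - 1 / (p : ℝ)) ≠ 0 := mul_ne_zero hd1 hd2
  have hre : ∀ c x : ℝ, c * (x / ((1 - (nu p H : ℝ) / p) * (1 - 1 / (p : ℝ))))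
      = c * x / ((1 - (nu p H : ℝ) / p) * (1 - 1 / (p : ℝ))) :=
    fun c x => (mul_div_assoc c x _).symm
  rw [hre, hre, ← add_div, div_eq_iff hD]
  field_simp
  ring

/-- Chinese-remainder factorization of the sum over `ZMod P`. -/
lemma crt_factor (P : ℕ) (hP : Squarefree P) (hpos : 0 < P)
    (g : (p : ℕ) → ZMod p → ℝ) :
    haveI : NeZero P := ⟨hpos.ne'⟩
    ∑ x : ZMod P, ∏ p ∈ P.primeFactors, g p (ZMod.cast x)
      = ∏ p ∈ P.primeFactors, localSum g p := by
  haveI : NeZero P := ⟨hpos.ne'⟩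
  haveI inst : ∀ i : {p // p ∈ P.primeFactors}, NeZero (i.1) :=
    fun i => ⟨(Nat.prime_of_mem_primeFactors i.2).ne_zero⟩
  have coprime : Pairwise (Function.onFun Nat.Coprime fun i : {p // p ∈ P.primeFactors} => i.1) := by
    intro i j hij
    exact (Nat.coprime_primes (Nat.prime_of_mem_primeFactors i.2)
      (Nat.prime_of_mem_primeFactors j.2)).mpr (fun h => hij (Subtype.ext h))
  have hprod : ∏ i : {p // p ∈ P.primeFactors}, (i.1 : ℕ) = P := by
    exact (Finset.prod_coe_sort P.primeFactors (fun p => p)).trans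
      (Nat.prod_primeFactors_of_squarefree hP)
  let e : ZMod P ≃+* ∀ i : {p // p ∈ P.primeFactors}, ZMod i.1 :=
    (ZMod.ringEquivCongr hprod.symm).trans (ZMod.prodEquivPi _ coprime)
  have hcomp : ∀ (i : {p // p ∈ P.primeFactors}) (x : ZMod P), e x i = ZMod.cast x := by
    intro i x
    have hdvd : (i.1 : ℕ) ∣ P := Nat.dvd_of_mem_primeFactors i.2
    have h1 : (Pi.evalRingHom (fun i : {p // p ∈ P.primeFactors} => ZMod i.1) i).comp
          (e : ZMod P →+* ∀ i : {p // p ∈ P.primeFactors}, ZMod i.1)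
        = ZMod.castHom hdvd (ZMod i.1) := RingHom.ext_zmod _ _
    have h2 := RingHom.congr_fun h1 x
    simpa [ZMod.castHom_apply] using h2
  calc ∑ x : ZMod P, ∏ p ∈ P.primeFactors, g p (ZMod.cast x)
      = ∑ x : ZMod P, ∏ i : {p // p ∈ P.primeFactors}, g i.1 (e x i) := by
        refine Finset.sum_congr rfl fun x _ => ?_
        rw [← Finset.prod_coe_sort]
        exact Finset.prod_congr rfl fun i _ => by rw [hcomp]
    _ = ∑ y : ∀ i : {p // p ∈ P.primeFactors}, ZMod i.1, ∏ i, g i.1 (y i) :=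
        Fintype.sum_equiv e.toEquiv _ _ (fun x => rfl)
    _ = ∏ i : {p // p ∈ P.primeFactors}, ∑ a : ZMod i.1, g i.1 a := (Fintype.prod_sum _).symm
    _ = ∏ i : {p // p ∈ P.primeFactors}, localSum g i.1 :=
        Finset.prod_congr rfl fun i _ => (localSum_eq g i.1).symm
    _ = ∏ p ∈ P.primeFactors, localSum g p := Finset.prod_coe_sort _ _

theorem average_pi1_eq_one (H : Finset ℤ) (hadm : ∀ p : ℕ, p.Prime → nu p H < p)
    (P : ℕ) (hP : Squarefree P) (hpos : 0 < P) :
    (1 / (P : ℝ)) * ∑ h ∈ Finset.Icc (1 : ℤ) (P : ℤ),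
      ∏ p ∈ P.primeFactors,
        (1 - (nu p (insert h H) : ℝ) / p) /
          ((1 - (nu p H : ℝ) / p) * (1 - 1 / (p : ℝ))) = 1 := by
  haveI : NeZero P := ⟨hpos.ne'⟩
  set g : (p : ℕ) → ZMod p → ℝ := fun p a =>
    (1 - ((insert a (H.image fun h : ℤ => (h : ZMod p))).card : ℝ) / p) /
      ((1 - (nu p H : ℝ) / p) * (1 - 1 / (p : ℝ))) with hg
  have key : ∑ h ∈ Finset.Icc (1 : ℤ) (P : ℤ),
      ∏ p ∈ P.primeFactors,
        (1 - (nu p (insert h H) : ℝ) / p) /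
          ((1 - (nu p H : ℝ) / p) * (1 - 1 / (p : ℝ)))
      = ∑ x : ZMod P, ∏ p ∈ P.primeFactors, g p (ZMod.cast x) := by
    refine Finset.sum_bij (fun h _ => ((h : ℤ) : ZMod P)) (fun a ha => Finset.mem_univ _)
      ?_ ?_ ?_
    · intro a ha b hb hab
      rw [Finset.mem_Icc] at ha hb
      rw [ZMod.intCast_eq_intCast_iff] at hab
      have hdvd : (P : ℤ) ∣ a - b := Int.ModEq.dvd hab.symm
      have : a - b = 0 := by
        refine Int.eq_zero_of_abs_lt_dvd hdvd ?_
        rw [abs_lt]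
        constructor <;> omega
      omega
    · intro x _
      refine ⟨if x.val = 0 then (P : ℤ) else (x.val : ℤ), ?_, ?_⟩
      · rw [Finset.mem_Icc]
        have hvlt : x.val < P := ZMod.val_lt x
        split <;> omega
      · split
        next h =>
          have hx : x = 0 := by
            have h2 := ZMod.natCast_rightInverse (n := P) x
            rw [h] at h2
            simpa using h2.symm
          simp [hx]
        next h =>
          push_cast
          exact ZMod.natCast_rightInverse x
    · intro a ha
      refine Finset.prod_congr rfl fun p hp => ?_
      have hdvd : p ∣ P := Nat.dvd_of_mem_primeFactors hp
      have hcast : (ZMod.cast ((a : ZMod P)) : ZMod p) = (a : ZMod p) := by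
        rw [← ZMod.castHom_apply (h := hdvd), map_intCast]
      rw [hg]
      simp only [hcast]
      congr 2
      rw [nu, Finset.image_insert]
  rw [key, crt_factor P hP hpos g]
  have hloc : ∀ p ∈ P.primeFactors, localSum g p = (p : ℝ) := by
    intro p hp
    have hprime := Nat.prime_of_mem_primeFactors hp
    haveI : NeZero p := ⟨hprime.ne_zero⟩
    rw [localSum_eq]
    exact sum_local p hprime H (hadm p hprime)
  rw [Finset.prod_congr rfl hloc]
  have hPP : ∏ p ∈ P.primeFactors, (p : ℝ) = (P : ℝ) := by
    rw [← Nat.cast_prod, Nat.prod_primeFactors_of_squarefree hP]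
  rw [hPP]
  have : (P : ℝ) ≠ 0 := Nat.cast_ne_zero.mpr hpos.ne'
  field_simp
end

section
/- For any real y ≥ 2, ∑_{p > y} 1/p² ≤ C/(y log y) for an absolute constant C, where the sum runs over primes p > y. -/
open Filter Finset Topology

private lemma tele_hasSum (m : ℕ) (F : ℕ → ℝ) (hanti : ∀ n, m ≤ n → F (n + 1) ≤ F n)
    (h0 : Tendsto F atTop (𝓝 0)) :
    HasSum (fun n => if m ≤ n then F n - F (n + 1) else 0) (F m) := by
  set g : ℕ → ℝ := fun n => if m ≤ n then F n - F (n + 1) else 0 with hg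
  have hnn : ∀ n, 0 ≤ g n := by
    intro n
    simp only [hg]
    split
    · linarith [hanti n ‹_›]
    · exact le_refl 0
  have key : ∀ k : ℕ, ∑ i ∈ Finset.range (m + k), g i = F m - F (m + k) := by
    intro k
    induction k with
    | zero =>
      simp only [Nat.add_zero, sub_self]
      apply Finset.sum_eq_zero
      intro i hi
      simp only [Finset.mem_range] at hi
      simp [hg, Nat.not_le.mpr hi]
    | succ k ih =>
      rw [show m + (k + 1) = (m + k) + 1 by ring, Finset.sum_range_succ, ih]
      have : g (m + k) = F (m + k) - F (m + k + 1) := by simp [hg]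
      rw [this]; ring
  have key' : ∀ N, m ≤ N → ∑ i ∈ Finset.range N, g i = F m - F N := by
    intro N hN
    obtain ⟨k, rfl⟩ := Nat.exists_eq_add_of_le hN
    exact key k
  rw [hasSum_iff_tendsto_nat_of_nonneg hnn]
  have h1 : Tendsto (fun N : ℕ => F m - F N) atTop (𝓝 (F m - 0)) :=
    tendsto_const_nhds.sub h0
  rw [sub_zero] at h1
  apply h1.congr'
  filter_upwards [eventually_ge_atTop m] with N hN
  exact (key' N hN).symm

private lemma hasSum_tele_sq (p : ℕ) (hp : 1 ≤ p) :
    HasSum (fun n : ℕ => if p ≤ n then 1 / (n : ℝ) ^ 2 - 1 / ((n : ℝ) + 1) ^ 2 else 0)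
      (1 / (p : ℝ) ^ 2) := by
  have h := tele_hasSum p (fun n : ℕ => 1 / (n : ℝ) ^ 2) ?_ ?_
  · refine h.congr_fun fun n => ?_
    split
    · push_cast; ring_nf
    · rfl
  · intro n hn
    have hn1 : (1 : ℝ) ≤ (n : ℝ) := by exact_mod_cast hp.trans hn
    apply one_div_le_one_div_of_le (by positivity)
    push_cast
    nlinarith
  · have h2 := (show Tendsto (fun n : ℕ => 1 / (n:ℝ)) atTop (𝓝 0) from tendsto_one_div_atTop_nhds_zero_nat).pow 2
    simp only [zero_pow, ne_eq, OfNat.ofNat_ne_zero, not_false_eq_true] at h2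
    refine h2.congr fun n => ?_
    rw [div_pow, one_pow]

private lemma hasSum_tele_lin (m : ℕ) (hm : 1 ≤ m) :
    HasSum (fun n : ℕ => if m ≤ n then 1 / (n : ℝ) - 1 / ((n : ℝ) + 1) else 0)
      (1 / (m : ℝ)) := by
  have h := tele_hasSum m (fun n : ℕ => 1 / (n : ℝ)) ?_ ?_
  · refine h.congr_fun fun n => ?_
    split
    · push_cast; ring_nf
    · rfl
  · intro n hn
    have hn1 : (1 : ℝ) ≤ (n : ℝ) := by exact_mod_cast hm.trans hn
    apply one_div_le_one_div_of_le (by positivity)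
    push_cast; linarith
  · exact tendsto_one_div_atTop_nhds_zero_nat

private lemma chebyshev_sum_log (n : ℕ) (u : Finset Nat.Primes)
    (hu : ∀ p ∈ u, ((p : ℕ)) ≤ n) :
    ∑ p ∈ u, Real.log ((p : ℕ) : ℝ) ≤ (n : ℝ) * Real.log 4 := by
  have hinj : Set.InjOn (fun p : Nat.Primes => (p : ℕ)) u := fun a _ b _ h =>
    Nat.Primes.coe_nat_injective h
  have h1 : ∑ p ∈ u, Real.log ((p : ℕ) : ℝ)
      = ∑ q ∈ u.image (fun p : Nat.Primes => (p : ℕ)), Real.log (q : ℝ) := by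
    rw [Finset.sum_image (fun a ha b hb h => hinj ha hb h)]
  rw [h1]
  set v := u.image (fun p : Nat.Primes => (p : ℕ)) with hv
  have hvsub : v ⊆ (Finset.range (n + 1)).filter Nat.Prime := by
    intro q hq
    simp only [hv, Finset.mem_image] at hq
    obtain ⟨p, hp, rfl⟩ := hq
    simp only [Finset.mem_filter, Finset.mem_range]
    exact ⟨Nat.lt_succ_of_le (hu p hp), p.2⟩
  have hprodle : ∏ q ∈ v, q ≤ primorial n := by
    apply Finset.prod_le_prod_of_subset_of_one_le' hvsub
    intro q hq _
    exact ((Finset.mem_filter.mp hq).2).one_lt.le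
  have h2 : ∑ q ∈ v, Real.log (q : ℝ) = Real.log ((∏ q ∈ v, q : ℕ) : ℝ) := by
    rw [Nat.cast_prod, Real.log_prod]
    intro q hq
    have := (Finset.mem_filter.mp (hvsub hq)).2.pos
    positivity
  rw [h2]
  calc Real.log ((∏ q ∈ v, q : ℕ) : ℝ) ≤ Real.log ((primorial n : ℕ) : ℝ) := by
        apply Real.log_le_log (by exact_mod_cast Finset.prod_pos fun q hq =>
          (Finset.mem_filter.mp (hvsub hq)).2.pos)
        exact_mod_cast hprodle
    _ ≤ Real.log ((4 : ℝ) ^ n) := by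
        apply Real.log_le_log (by exact_mod_cast primorial_pos n)
        exact_mod_cast primorial_le_4_pow n
    _ = (n : ℝ) * Real.log 4 := by rw [Real.log_pow]

theorem sum_inv_sq_primes_gt : ∃ C : ℝ, 0 < C ∧ ∀ y : ℝ, 2 ≤ y →
    (∑' p : Nat.Primes, if y < ((p : ℕ) : ℝ) then 1 / ((p : ℕ) : ℝ) ^ 2 else 0) ≤
      C / (y * Real.log y) := by
  classical
  have hlog4 : 0 < Real.log 4 := Real.log_pos (by norm_num)
  refine ⟨3 * Real.log 4, by positivity, ?_⟩
  intro y hy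
  have hy0 : (0:ℝ) < y := by linarith
  have hlogy : 0 < Real.log y := Real.log_pos (by linarith)
  set f : Nat.Primes → ℝ := fun p => if y < ((p : ℕ) : ℝ) then 1 / ((p : ℕ) : ℝ) ^ 2 else 0
    with hf
  have hfnn : ∀ p, 0 ≤ f p := by
    intro p
    simp only [hf]
    split
    · positivity
    · exact le_refl 0
  set m : ℕ := ⌊y⌋₊ with hm
  have hm2 : 2 ≤ m := Nat.le_floor (by exact_mod_cast hy)
  have hym : y < (m:ℝ) + 1 := Nat.lt_floor_add_one y
  set b : ℕ → ℝ := fun n =>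
    3 * Real.log 4 * (if m + 1 ≤ n then 1/(n:ℝ) - 1/((n:ℝ)+1) else 0) with hb
  have hbsum : HasSum b (3 * Real.log 4 * (1 / ((m:ℝ)+1))) := by
    have h := (hasSum_tele_lin (m+1) (by omega)).mul_left (3 * Real.log 4)
    push_cast at h
    exact h
  have key : ∀ s : Finset Nat.Primes, ∑ p ∈ s, f p ≤ 3 * Real.log 4 / (y * Real.log y) := by
    intro s
    set t := s.filter (fun p : Nat.Primes => y < ((p:ℕ):ℝ)) with ht
    have h0 : ∑ p ∈ s, f p = ∑ p ∈ t, 1 / ((p:ℕ):ℝ)^2 := by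
      rw [ht, Finset.sum_filter]
    have hpfacts : ∀ p ∈ t, y < ((p:ℕ):ℝ) := fun p hp => (Finset.mem_filter.mp hp).2
    set g : Nat.Primes → ℕ → ℝ := fun p n =>
      if (p:ℕ) ≤ n then Real.log ((p:ℕ):ℝ) * (1/(n:ℝ)^2 - 1/((n:ℝ)+1)^2) else 0 with hgdef
    have hgsum : ∀ p : Nat.Primes,
        HasSum (g p) (Real.log ((p:ℕ):ℝ) * (1/((p:ℕ):ℝ)^2)) := by
      intro p
      have h := (hasSum_tele_sq (p:ℕ) p.2.one_lt.le).mul_left (Real.log ((p:ℕ):ℝ))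
      refine h.congr_fun fun n => ?_
      simp only [hgdef, mul_ite, mul_zero]
    -- pointwise bound in n
    have hpt : ∀ n : ℕ, ∑ p ∈ t, g p n ≤ b n := by
      intro n
      by_cases hn : m + 1 ≤ n
      · have hx1 : (1:ℝ) ≤ (n:ℝ) := by exact_mod_cast (by omega : 1 ≤ n)
        have hx0 : (0:ℝ) < (n:ℝ) := by linarith
        have hdnn : 0 ≤ 1/(n:ℝ)^2 - 1/((n:ℝ)+1)^2 := by
          have h1 : 1/((n:ℝ)+1)^2 ≤ 1/(n:ℝ)^2 :=
            one_div_le_one_div_of_le (by positivity) (by nlinarith)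
          linarith
        set u := t.filter (fun p : Nat.Primes => (p:ℕ) ≤ n) with hu
        have e1 : ∑ p ∈ u, (Real.log ((p:ℕ):ℝ) * (1/(n:ℝ)^2 - 1/((n:ℝ)+1)^2))
            = ∑ p ∈ t, g p n := by
          rw [hu, Finset.sum_filter]
        have hcheb : ∑ p ∈ u, Real.log ((p:ℕ):ℝ) ≤ (n:ℝ) * Real.log 4 :=
          chebyshev_sum_log n u (fun p hp => (Finset.mem_filter.mp hp).2)
        have e2 : (n:ℝ)*(1/(n:ℝ)^2 - 1/((n:ℝ)+1)^2)
            ≤ 3*(1/(n:ℝ) - 1/((n:ℝ)+1)) := by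
          have ea : (n:ℝ)*(1/(n:ℝ)^2 - 1/((n:ℝ)+1)^2)
              = (2*(n:ℝ)+1)/((n:ℝ)*((n:ℝ)+1)^2) := by
            field_simp
            ring
          have eb : 3*(1/(n:ℝ) - 1/((n:ℝ)+1)) = 3/((n:ℝ)*((n:ℝ)+1)) := by
            field_simp
            ring
          rw [ea, eb, div_le_div_iff₀ (by positivity) (by positivity)]
          nlinarith
        calc ∑ p ∈ t, g p n
            = (∑ p ∈ u, Real.log ((p:ℕ):ℝ)) * (1/(n:ℝ)^2 - 1/((n:ℝ)+1)^2) := by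
              rw [← e1, Finset.sum_mul]
          _ ≤ ((n:ℝ) * Real.log 4) * (1/(n:ℝ)^2 - 1/((n:ℝ)+1)^2) :=
              mul_le_mul_of_nonneg_right hcheb hdnn
          _ = Real.log 4 * ((n:ℝ)*(1/(n:ℝ)^2 - 1/((n:ℝ)+1)^2)) := by ring
          _ ≤ Real.log 4 * (3*(1/(n:ℝ) - 1/((n:ℝ)+1))) :=
              mul_le_mul_of_nonneg_left e2 hlog4.le
          _ = b n := by simp only [hb, if_pos hn]; ring
      · have hz : ∀ p ∈ t, g p n = 0 := by
          intro p hp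
          have hyP := hpfacts p hp
          have hnle : ¬((p:ℕ) ≤ n) := by
            intro hle
            have hmp : m < (p:ℕ) := by
              rw [hm]
              exact (Nat.floor_lt hy0.le).mpr hyP
            omega
          simp [hgdef, hnle]
        rw [Finset.sum_eq_zero hz]
        simp [hb, hn, show ¬ m < n by omega]
    have hgsummable : ∀ p ∈ t, Summable (g p) := fun p _ => (hgsum p).summable
    have hsum_n : Summable (fun n => ∑ p ∈ t, g p n) := summable_sum hgsummable
    -- main chain
    rw [h0]
    have step1 : ∑ p ∈ t, 1 / ((p:ℕ):ℝ)^2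
        ≤ ∑ p ∈ t, (1/Real.log y) * (Real.log ((p:ℕ):ℝ) * (1/((p:ℕ):ℝ)^2)) := by
      apply Finset.sum_le_sum
      intro p hp
      have hP0 : (0:ℝ) < ((p:ℕ):ℝ) := by exact_mod_cast p.2.pos
      have hllog : Real.log y ≤ Real.log ((p:ℕ):ℝ) :=
        Real.log_le_log hy0 (hpfacts p hp).le
      have e : (1/Real.log y) * (Real.log ((p:ℕ):ℝ) * (1/((p:ℕ):ℝ)^2))
          = (Real.log ((p:ℕ):ℝ) / Real.log y) * (1/((p:ℕ):ℝ)^2) := by ring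
      rw [e]
      nth_rewrite 1 [show 1 / ((p:ℕ):ℝ)^2 = 1 * (1/((p:ℕ):ℝ)^2) by ring]
      apply mul_le_mul_of_nonneg_right _ (by positivity)
      exact (one_le_div hlogy).mpr hllog
    have step2 : ∑ p ∈ t, (1/Real.log y) * (Real.log ((p:ℕ):ℝ) * (1/((p:ℕ):ℝ)^2))
        = (1/Real.log y) * ∑' n : ℕ, ∑ p ∈ t, g p n := by
      rw [← Finset.mul_sum]
      congr 1
      rw [Summable.tsum_finsetSum hgsummable]
      exact Finset.sum_congr rfl fun p _ => ((hgsum p).tsum_eq).symm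
    have step3 : (∑' n : ℕ, ∑ p ∈ t, g p n) ≤ 3 * Real.log 4 * (1 / ((m:ℝ)+1)) := by
      rw [← hbsum.tsum_eq]
      exact Summable.tsum_le_tsum hpt hsum_n hbsum.summable
    have step4 : 3 * Real.log 4 * (1 / ((m:ℝ)+1)) ≤ 3 * Real.log 4 * (1/y) := by
      apply mul_le_mul_of_nonneg_left _ (by positivity)
      exact one_div_le_one_div_of_le hy0 hym.le
    have efin : (1/Real.log y) * (3 * Real.log 4 * (1/y))
        = 3 * Real.log 4 / (y * Real.log y) := by
      field_simp
    calc ∑ p ∈ t, 1 / ((p:ℕ):ℝ)^2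
        ≤ (1/Real.log y) * ∑' n : ℕ, ∑ p ∈ t, g p n := by rw [← step2]; exact step1
      _ ≤ (1/Real.log y) * (3 * Real.log 4 * (1 / ((m:ℝ)+1))) :=
          mul_le_mul_of_nonneg_left step3 (by positivity)
      _ ≤ (1/Real.log y) * (3 * Real.log 4 * (1/y)) :=
          mul_le_mul_of_nonneg_left step4 (by positivity)
      _ = 3 * Real.log 4 / (y * Real.log y) := efin
  have hsummable : Summable f := summable_of_sum_le hfnn key
  exact Summable.tsum_le_of_sum_le hsummable key
end
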